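/- Let G = (V, E, (V_□, V_◯, V_△)) be a stochastic game and X ⊆ V. Let Attr'(X) be the greatest fixed point of Z ↦ lfp(Y ↦ X ∪ Pre(Y) ∪ Pre_△(Z, Y)). Then every Random-fair play v : ℕ → V with v 0 ∈ Attr'(X) visits X: there exists i with v i ∈ X. (This is the path-level content of the claim that from Attr'(X) every path reaches X almost surely, regardless of the players' strategies.) -/
import Mathlib


/-- A stochastic game `G = (V, E, (V_□, V_◯, V_△))`: a directed graph on `V` in
which every vertex has at least one outgoing edge, together with a partition of
the vertices into Even (`VE = V_□`), Odd (`VO = V_◯`) and Random (`VR = V_△`). -/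
structure SGame (V : Type*) where
  E : Set (V × V)
  VE : Set V
  VO : Set V
  VR : Set V
  serial : ∀ u : V, ∃ w, (u, w) ∈ E
  cover : VE ∪ VO ∪ VR = Set.univ
  dEO : Disjoint VE VO
  dER : Disjoint VE VR
  dOR : Disjoint VO VR

namespace SGame

variable {V : Type*}

/-- `Pre(Y) = {u ∈ V : ∀ w, (u,w) ∈ E → w ∈ Y}`. -/
def Pre (G : SGame V) (Y : Set V) : Set V := {u | ∀ w, (u, w) ∈ G.E → w ∈ Y}

/-- `Pre_□(Y) = {u ∈ V_□ : ∃ w ∈ Y, (u,w) ∈ E}`. -/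
def PreE (G : SGame V) (Y : Set V) : Set V := {u | u ∈ G.VE ∧ ∃ w ∈ Y, (u, w) ∈ G.E}

/-- `Pre_△(Z,Y) = {u ∈ V_△ : (∀ w, (u,w) ∈ E → w ∈ Z) ∧ (∃ w ∈ Y, (u,w) ∈ E)}`. -/
def PreR (G : SGame V) (Z Y : Set V) : Set V :=
  {u | u ∈ G.VR ∧ (∀ w, (u, w) ∈ G.E → w ∈ Z) ∧ ∃ w ∈ Y, (u, w) ∈ G.E}

lemma Pre_mono (G : SGame V) : Monotone G.Pre :=
  fun _ _ h _ hu w hw => h (hu w hw)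

lemma PreE_mono (G : SGame V) : Monotone G.PreE := by
  rintro Y Z h u ⟨h1, w, hw, he⟩
  exact ⟨h1, w, h hw, he⟩

lemma PreR_mono (G : SGame V) {Z Z' Y Y' : Set V} (hZ : Z ⊆ Z') (hY : Y ⊆ Y') :
    G.PreR Z Y ⊆ G.PreR Z' Y' := by
  rintro u ⟨h1, h2, w, hw, he⟩
  exact ⟨h1, fun w hw => hZ (h2 w hw), w, hY hw, he⟩

/-- The monotone map `Y ↦ X ∪ Pre(Y)`. -/
def attrOp (G : SGame V) (X : Set V) : Set V →o Set V :=
  ⟨fun Y => X ∪ G.Pre Y, fun _ _ h => Set.union_subset_union_right X (G.Pre_mono h)⟩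

/-- `Attr(X) = lfp (Y ↦ X ∪ Pre(Y))`. -/
def Attr (G : SGame V) (X : Set V) : Set V := OrderHom.lfp (G.attrOp X)

/-- The monotone map `Y ↦ X ∪ Pre(Y) ∪ Pre_□(Y)`. -/
def attrOpE (G : SGame V) (X : Set V) : Set V →o Set V :=
  ⟨fun Y => X ∪ G.Pre Y ∪ G.PreE Y, fun _ _ h =>
    Set.union_subset_union (Set.union_subset_union_right X (G.Pre_mono h)) (G.PreE_mono h)⟩

/-- `Attr_□(X) = lfp (Y ↦ X ∪ Pre(Y) ∪ Pre_□(Y))`. -/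
def AttrE (G : SGame V) (X : Set V) : Set V := OrderHom.lfp (G.attrOpE X)

/-- The monotone map `Y ↦ X ∪ Pre(Y) ∪ Pre_△(Z,Y)` (for a fixed `Z`). -/
def attrOp' (G : SGame V) (X Z : Set V) : Set V →o Set V :=
  ⟨fun Y => X ∪ G.Pre Y ∪ G.PreR Z Y, fun _ _ h =>
    Set.union_subset_union (Set.union_subset_union_right X (G.Pre_mono h))
      (G.PreR_mono le_rfl h)⟩

/-- The monotone map `Z ↦ lfp (Y ↦ X ∪ Pre(Y) ∪ Pre_△(Z,Y))`. -/
def attrOuter' (G : SGame V) (X : Set V) : Set V →o Set V :=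
  ⟨fun Z => OrderHom.lfp (G.attrOp' X Z), by
    intro Z Z' h
    exact OrderHom.lfp.monotone fun Y =>
      Set.union_subset_union_right _ (G.PreR_mono h le_rfl)⟩

/-- `Attr'(X) = gfp (Z ↦ lfp (Y ↦ X ∪ Pre(Y) ∪ Pre_△(Z,Y)))`. -/
def Attr' (G : SGame V) (X : Set V) : Set V := OrderHom.gfp (G.attrOuter' X)

/-- The monotone map `Y ↦ X ∪ Pre_□(Y) ∪ Pre(Y) ∪ Pre_△(Z,Y)` (for a fixed `Z`). -/
def attrOpE' (G : SGame V) (X Z : Set V) : Set V →o Set V :=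
  ⟨fun Y => X ∪ G.PreE Y ∪ G.Pre Y ∪ G.PreR Z Y, fun _ _ h =>
    Set.union_subset_union
      (Set.union_subset_union (Set.union_subset_union_right X (G.PreE_mono h)) (G.Pre_mono h))
      (G.PreR_mono le_rfl h)⟩

/-- The monotone map `Z ↦ lfp (Y ↦ X ∪ Pre_□(Y) ∪ Pre(Y) ∪ Pre_△(Z,Y))`. -/
def attrOuterE' (G : SGame V) (X : Set V) : Set V →o Set V :=
  ⟨fun Z => OrderHom.lfp (G.attrOpE' X Z), by
    intro Z Z' h
    exact OrderHom.lfp.monotone fun Y =>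
      Set.union_subset_union_right _ (G.PreR_mono h le_rfl)⟩

/-- `Attr'_□(X) = gfp (Z ↦ lfp (Y ↦ X ∪ Pre_□(Y) ∪ Pre(Y) ∪ Pre_△(Z,Y)))`. -/
def AttrE' (G : SGame V) (X : Set V) : Set V := OrderHom.gfp (G.attrOuterE' X)

/-- `Edges_□(X,Y) = {(u,w) ∈ E : u ∈ X ∩ V_□ ∧ w ∈ Y}`. -/
def EdgesE (G : SGame V) (X Y : Set V) : Set (V × V) :=
  {e | e ∈ G.E ∧ e.1 ∈ X ∧ e.1 ∈ G.VE ∧ e.2 ∈ Y}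

/-- A play: an infinite sequence of vertices following the edges of the game. -/
def IsPlay (G : SGame V) (v : ℕ → V) : Prop := ∀ i, (v i, v (i + 1)) ∈ G.E

/-- A play is Random-fair if from every Random vertex occurring infinitely
often, every outgoing edge is taken infinitely often. -/
def RandomFair (G : SGame V) (v : ℕ → V) : Prop :=
  ∀ u ∈ G.VR, {i | v i = u}.Infinite →
    ∀ u', (u, u') ∈ G.E → {i | (v i, v (i + 1)) = (u, u')}.Infinite

/-- The monotone map `Y ↦ X ∩ (Pre_□(Y) ∪ Pre(Y))` of the safety algorithm. -/
def safetyOp (G : SGame V) (X : Set V) : Set V →o Set V :=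
  ⟨fun Y => X ∩ (G.PreE Y ∪ G.Pre Y), fun _ _ h =>
    Set.inter_subset_inter (le_refl X)
      (Set.union_subset_union (G.PreE_mono h) (G.Pre_mono h))⟩

/-- The winning set for the safety objective `□X`:
the greatest fixed point of `Y ↦ X ∩ (Pre_□(Y) ∪ Pre(Y))`. -/
def SafeW (G : SGame V) (X : Set V) : Set V := OrderHom.gfp (G.safetyOp X)

end SGame

/-- Every Random-fair play starting in
`Attr'(X) = gfp (Z ↦ lfp (Y ↦ X ∪ Pre(Y) ∪ Pre_△(Z,Y)))` visits `X`. -/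
theorem attr'_visits_of_randomFair {V : Type*} [Fintype V] (G : SGame V) (X : Set V)
    (v : ℕ → V) (hplay : G.IsPlay v) (hfair : G.RandomFair v)
    (hv0 : v 0 ∈ G.Attr' X) :
    ∃ i, v i ∈ X := by
  classical
  by_contra hX
  push_neg at hX
  set A := G.Attr' X with hA
  -- A is a fixed point of the outer map, hence A = lfp (attrOp' X A)
  have houter : (G.attrOuter' X) A = A := OrderHom.map_gfp _
  have hlfp : OrderHom.lfp (G.attrOp' X A) = A := houter
  set f := G.attrOp' X A with hf
  have hfpA : f A = A := by
    have := OrderHom.map_lfp f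
    rwa [hlfp] at this
  have hfapp : ∀ Y, f Y = X ∪ G.Pre Y ∪ G.PreR A Y := fun Y => rfl
  -- invariance: the play stays in A
  have hinv : ∀ i, v i ∈ A := by
    intro i
    induction i with
    | zero => exact hv0
    | succ n ih =>
      have : v n ∈ f A := by rwa [hfpA]
      rw [hfapp] at this
      rcases this with (hx | hpre) | hpr
      · exact absurd hx (hX n)
      · exact hpre _ (hplay n)
      · exact hpr.2.1 _ (hplay n)
  -- approximants of the least fixed point
  set D : ℕ → Set V := fun n => f^[n] ∅ with hD
  have hDsucc : ∀ n, D (n + 1) = f (D n) := by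
    intro n; simp only [hD, Function.iterate_succ_apply']
  -- the rank function
  set rk : V → ℕ := fun w => sInf {n | w ∈ D n} with hrk
  -- the union of the approximants is a prefixed point, hence contains A
  have hAU : ∀ u ∈ A, ∃ n, u ∈ D n := by
    have hpre : f (⋃ n, D n) ≤ ⋃ n, D n := by
      intro u hu
      rw [hfapp] at hu
      rcases hu with (hx | hpre) | hpr
      · exact Set.mem_iUnion.mpr ⟨1, by rw [show (1:ℕ) = 0 + 1 from rfl, hDsucc, hfapp]; exact Or.inl (Or.inl hx)⟩
      · -- all successors lie in some D n; take a uniform bound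
        have hmem : ∀ w, (∃ n, w ∈ D n) → w ∈ D (rk w) := by
          intro w hw
          have : rk w ∈ {n | w ∈ D n} := Nat.sInf_mem (by exact hw)
          exact this
        have hDmono : Monotone D := by
          apply monotone_nat_of_le_succ
          intro n
          induction n with
          | zero => simp [hD]
          | succ m ih =>
            rw [hDsucc, hDsucc]
            exact f.monotone ih
        set N := Finset.univ.sup rk with hN
        refine Set.mem_iUnion.mpr ⟨N + 1, ?_⟩
        rw [hDsucc, hfapp]
        refine Or.inl (Or.inr ?_)
        intro w hw
        have hw' : ∃ n, w ∈ D n := by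
          have := hpre w hw
          simpa using this
        have : w ∈ D (rk w) := hmem w hw'
        exact hDmono (Finset.le_sup (Finset.mem_univ w)) this
      · obtain ⟨hR, hall, w, hw, he⟩ := hpr
        have hw' : ∃ n, w ∈ D n := by simpa using hw
        obtain ⟨n, hn⟩ := hw'
        refine Set.mem_iUnion.mpr ⟨n + 1, ?_⟩
        rw [hDsucc, hfapp]
        exact Or.inr ⟨hR, hall, w, hn, he⟩
    intro u hu
    have : A ⊆ ⋃ n, D n := by
      have := OrderHom.lfp_le f hpre
      rwa [hlfp] at this
    simpa using this hu
  have hDmono : Monotone D := by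
    apply monotone_nat_of_le_succ
    intro n
    induction n with
    | zero => simp [hD]
    | succ m ih =>
      rw [hDsucc, hDsucc]
      exact f.monotone ih
  -- the set of vertices visited infinitely often
  set Q : Set V := {u | {i | v i = u}.Infinite} with hQ
  have hQne : Q.Nonempty := by
    obtain ⟨u, hu⟩ := Finite.exists_infinite_fiber v
    refine ⟨u, ?_⟩
    have : (v ⁻¹' {u}).Infinite := Set.infinite_coe_iff.mp hu
    simpa [Set.preimage, hQ] using this
  -- beyond some index, the play only visits vertices of Q
  have hNbig : ∃ N, ∀ i, N ≤ i → v i ∈ Q := by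
    have hBsub : {i | v i ∉ Q} ⊆ ⋃ u ∈ (Qᶜ : Set V), {i | v i = u} := by
      intro i hi
      exact Set.mem_biUnion hi rfl
    have hBfin : {i | v i ∉ Q}.Finite := by
      refine Set.Finite.subset (Set.Finite.biUnion (Set.toFinite _) ?_) hBsub
      intro u hu
      exact Set.not_infinite.mp hu
    obtain ⟨N, hN⟩ := hBfin.bddAbove
    refine ⟨N + 1, fun i hi => ?_⟩
    by_contra hiQ
    have := hN hiQ
    omega
  obtain ⟨N, hNQ⟩ := hNbig
  -- pick a vertex of Q with minimal rank
  obtain ⟨u₀, hu₀Q, hu₀min⟩ := Set.exists_min_image Q rk (Set.toFinite Q) hQne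
  set r := rk u₀ with hr
  have hu₀occ : {i | v i = u₀}.Infinite := hu₀Q
  obtain ⟨i₀, hi₀⟩ := hu₀occ.nonempty
  have hu₀A : ∃ n, u₀ ∈ D n := hAU u₀ (hi₀ ▸ hinv i₀)
  have hu₀Dr : u₀ ∈ D r := Nat.sInf_mem hu₀A
  have hrpos : 1 ≤ r := by
    by_contra h
    have : r = 0 := by omega
    rw [this] at hu₀Dr
    simp [hD] at hu₀Dr
  have hu₀Dr' : u₀ ∈ f (D (r - 1)) := by
    have : r = (r - 1) + 1 := by omega
    rw [this] at hu₀Dr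
    rwa [hDsucc] at hu₀Dr
  -- key: any vertex visited after N has rank ≥ r, but we find a successor of rank < r
  have hrank_ge : ∀ i, N ≤ i → r ≤ rk (v i) := fun i hi => hu₀min _ (hNQ i hi)
  rw [hfapp] at hu₀Dr'
  rcases hu₀Dr' with (hx | hpre) | hpr
  · exact absurd (hi₀ ▸ hx) (hX i₀)
  · obtain ⟨i, hvi, hiN⟩ := hu₀occ.exists_gt N
    have hsucc : v (i + 1) ∈ D (r - 1) := hpre _ (hvi ▸ hplay i)
    have h1 : rk (v (i + 1)) ≤ r - 1 := Nat.sInf_le hsucc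
    have h2 : r ≤ rk (v (i + 1)) := hrank_ge (i + 1) (by omega)
    omega
  · obtain ⟨hR, hall, w, hwD, he⟩ := hpr
    have hedge : {i | (v i, v (i + 1)) = (u₀, w)}.Infinite := hfair u₀ hR hu₀occ w he
    obtain ⟨i, hiN, hvi⟩ := hedge.exists_gt N
    have hvw : v (i + 1) = w := congrArg Prod.snd hiN
    have h1 : rk (v (i + 1)) ≤ r - 1 := Nat.sInf_le (hvw ▸ hwD)
    have h2 : r ≤ rk (v (i + 1)) := hrank_ge (i + 1) (by omega)
    omega
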